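/- Let F(z) = ∏_{k=1}^n (z−z_k) be a polynomial of degree n ≥ 2 and let w be a zero of F' that is not a zero of F. Then for every c ∈ ℂ, 1 ≤ ((1/n)Σ_k |z_k−c|) · max_k (1/|w−z_k|). In particular, for each critical point w of F there is a zero z_k of F with |w−z_k| ≤ σ_1(F), i.e., h(F',F) ≤ σ_1(F). -/

import Mathlib

open Finset

/-- For a critical point `w` of `F` that is not a zero of `F`:
`1 ≤ ((1/n) ∑ |z k - c|) · max_k |w - z k|⁻¹` for every `c`, and hence
there is a zero `z k` with `|w - z k| ≤ σ₁(F)`; i.e. `h(F',F) ≤ σ₁(F)`. -/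
theorem stmt_13 (n : ℕ) (hn : 2 ≤ n) (z : Fin n → ℂ)
    (f : ℂ → ℂ) (hf : ∀ x, f x = ∏ k, (x - z k))
    (w : ℂ) (hw : deriv f w = 0) (hwz : f w ≠ 0) :
    (∀ c : ℂ, 1 ≤ ((1 / (n : ℝ)) * ∑ k, ‖z k - c‖) * ⨆ k, ‖w - z k‖⁻¹) ∧
    ∃ k, ‖w - z k‖ ≤ ⨅ c : ℂ, (1 / (n : ℝ)) * ∑ k, ‖z k - c‖ := by
  have hne : Nonempty (Fin n) := ⟨⟨0, by omega⟩⟩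
  have hnpos : (0:ℝ) < n := by positivity
  have hzw : ∀ k, w - z k ≠ 0 := by
    intro k hk
    apply hwz
    rw [hf]
    exact Finset.prod_eq_zero (Finset.mem_univ k) hk
  -- compute the derivative
  have hfe : f = fun x => ∏ k, (x - z k) := funext hf
  have hd : HasDerivAt f (∑ k, (∏ j ∈ Finset.univ.erase k, (w - z j)) • (1:ℂ)) w := by
    rw [hfe]
    exact HasDerivAt.fun_finsetProd (fun i _ => (hasDerivAt_id w).sub_const (z i))
  have hsum0 : ∑ k, (w - z k)⁻¹ = 0 := by
    have h1 : ∑ k, (∏ j ∈ Finset.univ.erase k, (w - z j)) • (1:ℂ) = 0 := by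
      rw [← hd.deriv]; exact hw
    have h2 : ∀ k : Fin n, (∏ j ∈ Finset.univ.erase k, (w - z j)) = f w * (w - z k)⁻¹ := by
      intro k
      rw [hf w, ← Finset.mul_prod_erase Finset.univ _ (Finset.mem_univ k)]
      field_simp [hzw k]
    simp only [smul_eq_mul, mul_one, h2, ← Finset.mul_sum] at h1
    exact (mul_eq_zero.mp h1).resolve_left hwz
  -- the key identity
  have hkey : ∀ c : ℂ, ∑ k, (c - z k) * (w - z k)⁻¹ = (n : ℂ) := by
    intro c
    have : ∀ k : Fin n, (c - z k) * (w - z k)⁻¹ = (c - w) * (w - z k)⁻¹ + 1 := by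
      intro k
      have : c - z k = (c - w) + (w - z k) := by ring
      rw [this, add_mul, mul_inv_cancel₀ (hzw k)]
    simp only [this, Finset.sum_add_distrib, ← Finset.mul_sum, hsum0, mul_zero, zero_add]
    simp
  have hM : ∀ k : Fin n, ‖w - z k‖⁻¹ ≤ ⨆ k, ‖w - z k‖⁻¹ := fun k =>
    le_ciSup (f := fun k => ‖w - z k‖⁻¹) (Set.Finite.bddAbove (Set.finite_range _)) k
  have hMnn : (0:ℝ) ≤ ⨆ k, ‖w - z k‖⁻¹ := le_trans (by positivity) (hM ⟨0, by omega⟩)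
  have part1 : ∀ c : ℂ, 1 ≤ ((1 / (n : ℝ)) * ∑ k, ‖z k - c‖) * ⨆ k, ‖w - z k‖⁻¹ := by
    intro c
    have hb : (n:ℝ) ≤ (∑ k, ‖z k - c‖) * ⨆ k, ‖w - z k‖⁻¹ := by
      calc (n:ℝ) = ‖(n:ℂ)‖ := by simp
        _ = ‖∑ k, (c - z k) * (w - z k)⁻¹‖ := by rw [hkey c]
        _ ≤ ∑ k, ‖(c - z k) * (w - z k)⁻¹‖ := norm_sum_le _ _
        _ ≤ ∑ k, ‖z k - c‖ * ⨆ k, ‖w - z k‖⁻¹ := by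
            apply Finset.sum_le_sum
            intro k _
            rw [norm_mul, norm_inv, norm_sub_rev c (z k)]
            exact mul_le_mul_of_nonneg_left (hM k) (norm_nonneg _)
        _ = (∑ k, ‖z k - c‖) * ⨆ k, ‖w - z k‖⁻¹ := by rw [← Finset.sum_mul]
    rw [mul_assoc, one_div, inv_mul_eq_div, le_div_iff₀ hnpos, one_mul]
    exact hb
  refine ⟨part1, ?_⟩
  -- choose the closest zero
  obtain ⟨k₀, -, hk₀⟩ := Finset.exists_min_image Finset.univ (fun k => ‖w - z k‖)
    ⟨⟨0, by omega⟩, Finset.mem_univ _⟩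
  have hk₀pos : (0:ℝ) < ‖w - z k₀‖ := norm_pos_iff.mpr (hzw k₀)
  refine ⟨k₀, le_ciInf fun c => ?_⟩
  have hMle : (⨆ k, ‖w - z k‖⁻¹) ≤ ‖w - z k₀‖⁻¹ := by
    apply ciSup_le
    intro k
    exact inv_anti₀ hk₀pos (hk₀ k (Finset.mem_univ k))
  have h1 := part1 c
  have hσnn : 0 ≤ (1 / (n : ℝ)) * ∑ k, ‖z k - c‖ :=
    mul_nonneg (by positivity) (Finset.sum_nonneg fun k _ => norm_nonneg _)
  have : 1 ≤ ((1 / (n : ℝ)) * ∑ k, ‖z k - c‖) * ‖w - z k₀‖⁻¹ :=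
    le_trans h1 (mul_le_mul_of_nonneg_left hMle hσnn)
  rw [← div_eq_mul_inv, le_div_iff₀ hk₀pos, one_mul] at this
  exact this
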